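/- Let z̄ = (x̄,ȳ) ∈ ℝ^m × S^n and let q be the negative inertia index of G(z̄). If the W-SRCQ holds at z̄, then there exists an open neighborhood U of z̄ in ℝ^m × S^n such that the W-SRCQ holds at every z ∈ U for which the negative inertia index of G(z) equals q. -/

import Mathlib

open scoped Classical RealInnerProductSpace
open Matrix Set

noncomputable section

abbrev Mat (n : ℕ) : Type := Matrix (Fin n) (Fin n) ℝ

abbrev Em (m : ℕ) : Type := EuclideanSpace ℝ (Fin m)

attribute [instance] Matrix.frobeniusNormedAddCommGroup Matrix.frobeniusNormedSpace

/-- The trace (Frobenius) inner product `⟨A,B⟩ = tr(AᵀB)` on matrices; for symmetric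
matrices this is `tr(AB)`. -/
def minner {n : ℕ} (A B : Mat n) : ℝ := (Aᵀ * B).trace

/-- `P` is an orthogonal matrix. -/
def IsOrthoMat {n : ℕ} (P : Mat n) : Prop := P * Pᵀ = 1 ∧ Pᵀ * P = 1

/-- `(P, lam)` is an eigenvalue decomposition of `A` with orthogonal `P` and
nonincreasing eigenvalue vector `lam`: `A = P·Diag(lam)·Pᵀ`. -/
def IsEigDecomp {n : ℕ} (A P : Mat n) (lam : Fin n → ℝ) : Prop :=
  IsOrthoMat P ∧ Antitone lam ∧ A = P * Matrix.diagonal lam * Pᵀ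

/-- The stratum `M_{p,q}` of symmetric matrices with exactly `p` positive and `q` negative
eigenvalues. -/
def stratum (n p q : ℕ) : Set (Mat n) :=
  {A | ∃ P lam, IsEigDecomp A P lam ∧
    {i : Fin n | 0 < lam i}.ncard = p ∧ {i : Fin n | lam i < 0}.ncard = q}

/-- The metric projection `Π₊` onto the positive semidefinite cone (defined through an
eigenvalue decomposition; the value is independent of the choice of decomposition). -/
noncomputable def piPlus {n : ℕ} (A : Mat n) : Mat n :=
  if h : ∃ P lam, IsEigDecomp A P lam then
    h.choose * Matrix.diagonal (fun i => max (h.choose_spec.choose i) 0) * h.chooseᵀ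
  else 0

variable {m n : ℕ}

/-- `G(z) = g(x) + y`. -/
def Gmap (g : Em m → Mat n) (z : Em m × Mat n) : Mat n := g z.1 + z.2

/-- The adjoint `∇g(x) : Sⁿ → ℝᵐ` of the derivative `g'(x)`, characterized by
`⟨∇g(x)H, v⟩ = ⟨H, g'(x)v⟩`. -/
def gradg (g : Em m → Mat n) (x : Em m) (H : Mat n) : Em m :=
  (EuclideanSpace.equiv (Fin m) ℝ).symm
    fun k => (Hᵀ * fderiv ℝ g x (EuclideanSpace.single k 1)).trace

/-- The Lagrangian `L(x,y) = f(x) + ⟨y, g(x)⟩`. -/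
def Lfun (f : Em m → ℝ) (g : Em m → Mat n) (x : Em m) (y : Mat n) : ℝ :=
  f x + minner y (g x)

/-- The Hessian `∇²ₓₓL(x,y)` of `x ↦ L(x,y)`, as a continuous linear map `ℝᵐ → ℝᵐ`. -/
def hessL (f : Em m → ℝ) (g : Em m → Mat n) (x : Em m) (y : Mat n) : Em m →L[ℝ] Em m :=
  fderiv ℝ (fun u => gradient (fun w => Lfun f g w y) u) x

/-- The KKT mapping `F(z) = (∇f(x) + ∇g(x)y, −g(x) + Π₊(G(z)))`. -/
def KKTF (f : Em m → ℝ) (g : Em m → Mat n) (z : Em m × Mat n) : Em m × Mat n :=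
  (gradient f z.1 + gradg g z.1 z.2, - g z.1 + piPlus (Gmap g z))

/-- The lifted stratum `M̃_{p,q} = {z = (x,y) ∈ ℝᵐ × Sⁿ : G(z) ∈ M_{p,q}}`. -/
def lstratum (g : Em m → Mat n) (p q : ℕ) : Set (Em m × Mat n) :=
  {z | z.2.IsSymm ∧ Gmap g z ∈ stratum n p q}

/-- The norm `‖(u,H)‖ = sqrt(‖u‖² + ‖H‖²)` on `ℝᵐ × Sⁿ` (Frobenius norm on matrices). -/
def pnorm {m n : ℕ} (w : Em m × Mat n) : ℝ := Real.sqrt (‖w.1‖ ^ 2 + ‖w.2‖ ^ 2)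

/-- The weak strict Robinson constraint qualification (W-SRCQ) at `z`:
`g'(x)[ℝᵐ] + {PBPᵀ : B ∈ Sⁿ, B_{βγ} = 0, B_{γγ} = 0} = Sⁿ`
(for any eigenvalue decomposition `(P, lam)` of `G(z)`; independent of the choice). -/
def WSRCQ (g : Em m → Mat n) (z : Em m × Mat n) : Prop :=
  ∀ P lam, IsEigDecomp (Gmap g z) P lam →
    ∀ C : Mat n, C.IsSymm →
      ∃ (v : Em m) (B : Mat n), B.IsSymm ∧
        (∀ i j, lam i = 0 → lam j < 0 → B i j = 0) ∧
        (∀ i j, lam i < 0 → lam j < 0 → B i j = 0) ∧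
        C = fderiv ℝ g z.1 v + P * B * Pᵀ

/-- The constraint nondegeneracy at `z`:
`g'(x)[ℝᵐ] + {PBPᵀ : B ∈ Sⁿ, B_{ββ} = 0, B_{βγ} = 0, B_{γγ} = 0} = Sⁿ`. -/
def CNondeg (g : Em m → Mat n) (z : Em m × Mat n) : Prop :=
  ∀ P lam, IsEigDecomp (Gmap g z) P lam →
    ∀ C : Mat n, C.IsSymm →
      ∃ (v : Em m) (B : Mat n), B.IsSymm ∧
        (∀ i j, lam i = 0 → lam j = 0 → B i j = 0) ∧
        (∀ i j, lam i = 0 → lam j < 0 → B i j = 0) ∧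
        (∀ i j, lam i < 0 → lam j < 0 → B i j = 0) ∧
        C = fderiv ℝ g z.1 v + P * B * Pᵀ

/-- The strict Robinson constraint qualification (SRCQ) at a KKT pair `z`:
`g'(x)[ℝᵐ] + {PBPᵀ : B ∈ Sⁿ, B_{ββ} ⪰ 0, B_{βγ} = 0, B_{γγ} = 0} = Sⁿ`. -/
def SRCQ (g : Em m → Mat n) (z : Em m × Mat n) : Prop :=
  ∀ P lam, IsEigDecomp (Gmap g z) P lam →
    ∀ C : Mat n, C.IsSymm →
      ∃ (v : Em m) (B : Mat n), B.IsSymm ∧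
        (∀ u : Fin n → ℝ, (∀ i, lam i ≠ 0 → u i = 0) →
          0 ≤ ∑ i, ∑ j, u i * B i j * u j) ∧
        (∀ i j, lam i = 0 → lam j < 0 → B i j = 0) ∧
        (∀ i j, lam i < 0 → lam j < 0 → B i j = 0) ∧
        C = fderiv ℝ g z.1 v + P * B * Pᵀ

/-- The quadratic form
`Q(z,v) = ⟨v, ∇²ₓₓL(x,y)v⟩ + 2·Σ_{i∈α}Σ_{j∈γ} (−λⱼ/λᵢ)·([Pᵀ(g'(x)v)P]_{ij})²`. -/
def Qform (f : Em m → ℝ) (g : Em m → Mat n) (z : Em m × Mat n)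
    (P : Mat n) (lam : Fin n → ℝ) (v : Em m) : ℝ :=
  ⟪v, hessL f g z.1 z.2 v⟫ +
    2 * ∑ i : Fin n, ∑ j : Fin n,
      (if 0 < lam i ∧ lam j < 0 then
        (-lam j / lam i) * ((Pᵀ * fderiv ℝ g z.1 v * P) i j) ^ 2 else 0)

/-- `v ∈ appl(z)`: the blocks `ββ`, `βγ`, `γγ` of `Pᵀ(g'(x)v)P` vanish. -/
def memAppl (g : Em m → Mat n) (z : Em m × Mat n)
    (P : Mat n) (lam : Fin n → ℝ) (v : Em m) : Prop :=
  (∀ i j, lam i = 0 → lam j = 0 → (Pᵀ * fderiv ℝ g z.1 v * P) i j = 0) ∧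
  (∀ i j, lam i = 0 → lam j < 0 → (Pᵀ * fderiv ℝ g z.1 v * P) i j = 0) ∧
  (∀ i j, lam i < 0 → lam j < 0 → (Pᵀ * fderiv ℝ g z.1 v * P) i j = 0)

/-- `v ∈ app(z)`: the blocks `βγ`, `γγ` of `Pᵀ(g'(x)v)P` vanish. -/
def memApp (g : Em m → Mat n) (z : Em m × Mat n)
    (P : Mat n) (lam : Fin n → ℝ) (v : Em m) : Prop :=
  (∀ i j, lam i = 0 → lam j < 0 → (Pᵀ * fderiv ℝ g z.1 v * P) i j = 0) ∧
  (∀ i j, lam i < 0 → lam j < 0 → (Pᵀ * fderiv ℝ g z.1 v * P) i j = 0)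

/-- The weak second order condition (W-SOC) at `z`: `Q(z,v) ≠ 0` for every nonzero
`v ∈ appl(z)`. -/
def WSOC (f : Em m → ℝ) (g : Em m → Mat n) (z : Em m × Mat n) : Prop :=
  ∀ P lam, IsEigDecomp (Gmap g z) P lam →
    ∀ v : Em m, v ≠ 0 → memAppl g z P lam v → Qform f g z P lam v ≠ 0

/-- The strong second order sufficient condition (S-SOSC) at `z`: `Q(z,v) > 0` for every
nonzero `v ∈ app(z)`. -/
def SSOSC (f : Em m → ℝ) (g : Em m → Mat n) (z : Em m × Mat n) : Prop :=
  ∀ P lam, IsEigDecomp (Gmap g z) P lam →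
    ∀ v : Em m, v ≠ 0 → memApp g z P lam v → 0 < Qform f g z P lam v

/-- The second order necessary condition (SONC) at `z`. -/
def SONC (f : Em m → ℝ) (g : Em m → Mat n) (z : Em m × Mat n) : Prop :=
  ∀ P lam, IsEigDecomp (Gmap g z) P lam →
    ∀ v : Em m, v ≠ 0 →
      (∀ u : Fin n → ℝ, (∀ i, lam i ≠ 0 → u i = 0) →
        0 ≤ ∑ i, ∑ j, u i * (Pᵀ * fderiv ℝ g z.1 v * P) i j * u j) →
      memApp g z P lam v → 0 ≤ Qform f g z P lam v

/-- The W-SOC holds uniformly on a set `S`: there is `c > 0` with `Q(z,v) ≥ c‖v‖²` for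
every `z ∈ S` (in `ℝᵐ × Sⁿ`) and every `v ∈ appl(z)`. -/
def UnifWSOC (f : Em m → ℝ) (g : Em m → Mat n) (S : Set (Em m × Mat n)) : Prop :=
  ∃ c : ℝ, 0 < c ∧ ∀ z ∈ S, z.2.IsSymm →
    ∀ P lam, IsEigDecomp (Gmap g z) P lam →
      ∀ v : Em m, memAppl g z P lam v → c * ‖v‖ ^ 2 ≤ Qform f g z P lam v

/-- `H ∈ T_z`: `H ∈ Sⁿ` with `(PᵀHP)_{ββ} = 0`. -/
def memTz {n : ℕ} (P : Mat n) (lam : Fin n → ℝ) (H : Mat n) : Prop :=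
  H.IsSymm ∧ ∀ i j, lam i = 0 → lam j = 0 → (Pᵀ * H * P) i j = 0

/-- `Δ ∈ N_{G(z)}M_{p,q}`: `Δ ∈ Sⁿ` and `(PᵀΔP)_{ij} = 0` whenever `i ∉ β` or `j ∉ β`. -/
def memNormal {n : ℕ} (P : Mat n) (lam : Fin n → ℝ) (Δ : Mat n) : Prop :=
  Δ.IsSymm ∧ ∀ i j, (lam i ≠ 0 ∨ lam j ≠ 0) → (Pᵀ * Δ * P) i j = 0

/-- The map `ξ_z : T_z → Sⁿ`, `ξ_z(H) = P·M·Pᵀ`. -/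
def xiMap {n : ℕ} (P : Mat n) (lam : Fin n → ℝ) (H : Mat n) : Mat n :=
  P * (Matrix.of fun i j =>
    if 0 < lam i ∧ 0 < lam j then (Pᵀ * H * P) i j
    else if 0 < lam i ∧ lam j = 0 then (Pᵀ * H * P) i j
    else if lam i = 0 ∧ 0 < lam j then (Pᵀ * H * P) i j
    else if 0 < lam i ∧ lam j < 0 then (lam i / (lam i - lam j)) * (Pᵀ * H * P) i j
    else if lam i < 0 ∧ 0 < lam j then (lam j / (lam j - lam i)) * (Pᵀ * H * P) i j
    else 0) * Pᵀ

/-- The linear map `𝒜_z(v,H) = (∇²ₓₓL(x,y)v − ∇g(x)(g'(x)v) + ∇g(x)H, −g'(x)v + ξ_z(H))`. -/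
def Amap (f : Em m → ℝ) (g : Em m → Mat n) (z : Em m × Mat n)
    (P : Mat n) (lam : Fin n → ℝ) (v : Em m) (H : Mat n) : Em m × Mat n :=
  (hessL f g z.1 z.2 v - gradg g z.1 (fderiv ℝ g z.1 v) + gradg g z.1 H,
    - fderiv ℝ g z.1 v + xiMap P lam H)

/-- The positive inertia index of `A` is `p`. -/
def posInertiaIs {n : ℕ} (A : Mat n) (p : ℕ) : Prop :=
  ∃ P lam, IsEigDecomp A P lam ∧ {i : Fin n | 0 < lam i}.ncard = p

/-- The negative inertia index of `A` is `q`. -/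
def negInertiaIs {n : ℕ} (A : Mat n) (q : ℕ) : Prop :=
  ∃ P lam, IsEigDecomp A P lam ∧ {i : Fin n | lam i < 0}.ncard = q

end
noncomputable section
namespace WSRCQAux

variable {m n : ℕ}

/-- allowed (i,j) positions -/
def okp (lam : Fin n → ℝ) (i j : Fin n) : Prop :=
  ¬((lam i ≤ 0 ∧ lam j < 0) ∨ (lam j ≤ 0 ∧ lam i < 0))

lemma okp_symm {lam : Fin n → ℝ} {i j : Fin n} (h : okp lam i j) : okp lam j i := by
  unfold okp at *; tauto

def mask (lam : Fin n → ℝ) (B : Mat n) : Mat n :=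
  Matrix.of fun i j => if okp lam i j then (B i j + B j i) / 2 else 0

lemma mask_add (lam : Fin n → ℝ) (A B : Mat n) :
    mask lam (A + B) = mask lam A + mask lam B := by
  ext i j
  simp only [mask, Matrix.of_apply, Matrix.add_apply]
  split_ifs with h
  · ring
  · simp

lemma mask_smul (lam : Fin n → ℝ) (c : ℝ) (B : Mat n) :
    mask lam (c • B) = c • mask lam B := by
  ext i j
  simp only [mask, Matrix.of_apply, Matrix.smul_apply, smul_eq_mul]
  split_ifs with h
  · ring
  · simp

lemma mask_zero (lam : Fin n → ℝ) : mask lam (0 : Mat n) = 0 := by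
  ext i j; simp [mask]

lemma mask_isSymm (lam : Fin n → ℝ) (B : Mat n) : (mask lam B).IsSymm := by
  ext i j
  simp only [mask, Matrix.transpose_apply, Matrix.of_apply]
  by_cases h : okp lam i j
  · rw [if_pos h, if_pos (okp_symm h)]; ring
  · rw [if_neg h, if_neg (fun h' => h (okp_symm h'))]

/-- The linear equiv between matrices and Euclidean space. -/
def phiE : Mat n ≃ₗ[ℝ] EuclideanSpace ℝ (Fin n × Fin n) :=
  LinearEquiv.trans
    { toFun := fun A => fun p : Fin n × Fin n => A p.1 p.2
      invFun := fun f => Matrix.of fun i j => f (i, j)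
      map_add' := fun _ _ => rfl
      map_smul' := fun _ _ => rfl
      left_inv := fun _ => rfl
      right_inv := fun _ => rfl }
    (EuclideanSpace.equiv (Fin n × Fin n) ℝ).symm.toLinearEquiv

lemma inner_phiE (A B : Mat n) :
    (inner ℝ (phiE A) (phiE B) : ℝ) = ∑ i, ∑ j, A i j * B i j := by
  rw [PiLp.inner_apply]
  simp only [RCLike.inner_apply, starRingEnd_apply, star_trivial]
  rw [Fintype.sum_prod_type]
  exact Finset.sum_congr rfl fun i _ => Finset.sum_congr rfl fun j _ => mul_comm _ _

lemma sum_sq_entries (A : Mat n) (h : ∀ i j, A i j = 0) : A = 0 := by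
  ext i j; exact h i j

/-- trace form of double sums -/
lemma dsum_eq_trace (M N : Mat n) : ∑ i, ∑ j, M i j * N i j = (Mᵀ * N).trace := by
  rw [Matrix.trace]
  simp only [Matrix.diag_apply, Matrix.mul_apply, Matrix.transpose_apply]
  rw [Finset.sum_comm]

lemma exchange (P B C : Mat n) :
    ∑ i, ∑ j, (P * B * Pᵀ) i j * C i j = ∑ i, ∑ j, B i j * (Pᵀ * C * P) i j := by
  rw [dsum_eq_trace, dsum_eq_trace]
  rw [Matrix.transpose_mul, Matrix.transpose_mul, Matrix.transpose_transpose]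
  simp only [Matrix.mul_assoc]
  rw [Matrix.trace_mul_comm]
  simp only [Matrix.mul_assoc]

lemma sum_single (i j : Fin n) (Y : Mat n) :
    ∑ a, ∑ b, (if a = i ∧ b = j then (1:ℝ) else 0) * Y a b = Y i j := by
  simp [ite_and, Finset.sum_ite_eq, mul_comm]

/-- Duality: if the W-SRCQ surjectivity condition fails at `(T, P, lam)`, there is a
normalized symmetric witness orthogonal to the range. -/
lemma exists_witness (T : Em m →L[ℝ] Mat n) (hT : ∀ v, (T v).IsSymm)
    (P : Mat n) (lam : Fin n → ℝ)
    (hfail : ¬ ∀ C : Mat n, C.IsSymm →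
      ∃ (v : Em m) (B : Mat n), B.IsSymm ∧
        (∀ i j, lam i = 0 → lam j < 0 → B i j = 0) ∧
        (∀ i j, lam i < 0 → lam j < 0 → B i j = 0) ∧
        C = T v + P * B * Pᵀ) :
    ∃ C : Mat n, C.IsSymm ∧ (∑ i, ∑ j, C i j ^ 2) = 1 ∧
      (∀ v, ∑ i, ∑ j, C i j * (T v) i j = 0) ∧
      (∀ i j, okp lam i j → (Pᵀ * C * P) i j = 0) := by
  push_neg at hfail
  obtain ⟨C₀, hC₀s, hC₀⟩ := hfail
  -- the range submodule
  set L : (Em m × Mat n) →ₗ[ℝ] Mat n :=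
    { toFun := fun w => T w.1 + P * mask lam w.2 * Pᵀ
      map_add' := by
        intro a b
        simp only [Prod.fst_add, Prod.snd_add, map_add, mask_add, Matrix.mul_add,
          Matrix.add_mul]
        abel
      map_smul' := by
        intro c a
        simp only [Prod.smul_fst, Prod.smul_snd, T.map_smul, mask_smul, Matrix.mul_smul,
          Matrix.smul_mul, RingHom.id_apply, smul_add] } with hL
  set Psi : (Em m × Mat n) →ₗ[ℝ] EuclideanSpace ℝ (Fin n × Fin n) :=
    (phiE.toLinearMap).comp L with hPsi
  set W := LinearMap.range Psi with hW
  have hmask_ok : ∀ B : Mat n, (mask lam B).IsSymm ∧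
      (∀ i j, lam i = 0 → lam j < 0 → (mask lam B) i j = 0) ∧
      (∀ i j, lam i < 0 → lam j < 0 → (mask lam B) i j = 0) := by
    intro B
    refine ⟨mask_isSymm lam B, fun i j h1 h2 => ?_, fun i j h1 h2 => ?_⟩
    · simp only [mask, Matrix.of_apply]
      rw [if_neg]
      intro hok; exact hok (Or.inl ⟨le_of_eq h1, h2⟩)
    · simp only [mask, Matrix.of_apply]
      rw [if_neg]
      intro hok; exact hok (Or.inl ⟨le_of_lt h1, h2⟩)
  have hnotmem : phiE C₀ ∉ W := by
    rintro ⟨⟨v, B⟩, hvB⟩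
    have heq : T v + P * mask lam B * Pᵀ = C₀ := phiE.injective hvB
    obtain ⟨hs, h1, h2⟩ := hmask_ok B
    exact (hC₀ v (mask lam B) hs h1 h2 heq.symm).elim
  set prj := (W.orthogonalProjectionOnto (phiE C₀) : EuclideanSpace ℝ (Fin n × Fin n)) with hprj
  set D := phiE C₀ - prj with hD
  have hDW : D ∈ Wᗮ := W.sub_starProjection_mem_orthogonal _
  have hD0 : D ≠ 0 := by
    intro h
    apply hnotmem
    have : phiE C₀ = prj := by rwa [hD, sub_eq_zero] at h
    rw [this]
    exact SetLike.coe_mem _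
  set Ch := phiE.symm D with hCh
  have hChD : phiE Ch = D := phiE.apply_symm_apply D
  have hCh0 : Ch ≠ 0 := fun h => hD0 (by rw [← hChD, h, map_zero])
  -- symmetry of Ch
  have hprj_symm : (phiE.symm prj).IsSymm := by
    obtain ⟨⟨v, B⟩, hvB⟩ := (W.orthogonalProjectionOnto (phiE C₀)).2
    have : phiE.symm prj = T v + P * mask lam B * Pᵀ := by
      rw [hprj, ← hvB]
      exact phiE.symm_apply_apply _
    rw [this]
    refine (hT v).add ?_
    unfold Matrix.IsSymm
    rw [Matrix.transpose_mul, Matrix.transpose_mul, Matrix.transpose_transpose,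
      (mask_isSymm lam B), Matrix.mul_assoc]
  have hChsym : Ch.IsSymm := by
    have : Ch = C₀ - phiE.symm prj := by
      rw [hCh, hD, map_sub, phiE.symm_apply_apply]
    rw [this]
    exact hC₀s.sub hprj_symm
  -- orthogonality facts
  have horth : ∀ w ∈ W, (inner ℝ w D : ℝ) = 0 :=
    fun w hw => (Submodule.mem_orthogonal W D).mp hDW w hw
  have hbT : ∀ v, ∑ i, ∑ j, Ch i j * (T v) i j = 0 := by
    intro v
    have hw : phiE (T v) ∈ W := by
      refine ⟨(v, 0), ?_⟩
      simp [hPsi, hL, mask_zero]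
    have h0 := horth _ hw
    rw [← hChD, inner_phiE] at h0
    rw [← h0]
    congr 1; funext i; congr 1; funext j; ring
  have hbP : ∀ i j, okp lam i j → (Pᵀ * Ch * P) i j = 0 := by
    intro i j hok
    have hXsymm : (Pᵀ * Ch * P) j i = (Pᵀ * Ch * P) i j := by
      have h2 : (Pᵀ * Ch * P)ᵀ = Pᵀ * Ch * P := by
        rw [Matrix.transpose_mul, Matrix.transpose_mul, Matrix.transpose_transpose,
          hChsym, Matrix.mul_assoc]
      calc (Pᵀ * Ch * P) j i = (Pᵀ * Ch * P)ᵀ i j := (Matrix.transpose_apply _ i j).symm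
        _ = (Pᵀ * Ch * P) i j := by rw [h2]
    -- pick B supported at (i,j),(j,i)
    set B : Mat n := Matrix.of fun a b =>
      (if a = i ∧ b = j then (1:ℝ) else 0) + (if a = j ∧ b = i then (1:ℝ) else 0) with hB
    have hBswap : ∀ a b, B b a = B a b := by
      intro a b
      simp only [hB, Matrix.of_apply]
      rw [add_comm]
      congr 1
      · exact if_congr and_comm rfl rfl
      · exact if_congr and_comm rfl rfl
    have hBsymm : B.IsSymm := by
      ext a b
      rw [Matrix.transpose_apply]
      exact hBswap a b
    have hBmask : mask lam B = B := by
      ext a b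
      simp only [mask, Matrix.of_apply]
      by_cases hab : okp lam a b
      · rw [if_pos hab]
        have h3 := hBswap a b
        simp only [hB, Matrix.of_apply] at h3 ⊢
        rw [h3]; ring
      · rw [if_neg hab]
        simp only [hB, Matrix.of_apply]
        rw [if_neg, if_neg]
        · simp
        · rintro ⟨rfl, rfl⟩; exact hab (okp_symm hok)
        · rintro ⟨rfl, rfl⟩; exact hab hok
    have hw : phiE (P * B * Pᵀ) ∈ W := by
      refine ⟨(0, B), ?_⟩
      simp [hPsi, hL, hBmask]
    have h0 := horth _ hw
    rw [← hChD, inner_phiE, exchange] at h0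
    -- h0 : ∑ a, ∑ b, B a b * (Pᵀ * Ch * P) a b = 0
    have hsum : ∑ a, ∑ b, B a b * (Pᵀ * Ch * P) a b
        = (Pᵀ * Ch * P) i j + (Pᵀ * Ch * P) j i := by
      simp only [hB, Matrix.of_apply, add_mul, Finset.sum_add_distrib]
      rw [sum_single i j, sum_single j i]
    rw [hsum, hXsymm] at h0
    linarith
  -- normalize
  set S := ∑ i, ∑ j, Ch i j ^ 2 with hS
  have hSpos : 0 < S := by
    rcases lt_or_eq_of_le (show (0:ℝ) ≤ S from Finset.sum_nonneg fun i _ =>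
      Finset.sum_nonneg fun j _ => sq_nonneg _) with h | h
    · exact h
    · exfalso
      apply hCh0
      ext i j
      have hij : Ch i j ^ 2 = 0 := by
        have h1 : ∀ a ∈ Finset.univ, (0:ℝ) ≤ ∑ j, Ch a j ^ 2 := fun a _ =>
          Finset.sum_nonneg fun j _ => sq_nonneg _
        have h2 := (Finset.sum_eq_zero_iff_of_nonneg h1).mp h.symm i (Finset.mem_univ i)
        have h3 : ∀ b ∈ Finset.univ, (0:ℝ) ≤ Ch i b ^ 2 := fun b _ => sq_nonneg _
        exact (Finset.sum_eq_zero_iff_of_nonneg h3).mp h2 j (Finset.mem_univ j)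
      simpa using pow_eq_zero_iff (n := 2) (by norm_num) |>.mp hij
  refine ⟨(Real.sqrt S)⁻¹ • Ch, ?_, ?_, ?_, ?_⟩
  · unfold Matrix.IsSymm
    rw [Matrix.transpose_smul, hChsym]
  · simp only [Matrix.smul_apply, smul_eq_mul, mul_pow, ← Finset.mul_sum]
    rw [← hS, ← Real.sqrt_inv]
    rw [Real.sq_sqrt (by positivity)]
    field_simp
  · intro v
    simp only [Matrix.smul_apply, smul_eq_mul]
    have : ∑ i, ∑ j, (Real.sqrt S)⁻¹ * Ch i j * (T v) i j
        = (Real.sqrt S)⁻¹ * ∑ i, ∑ j, Ch i j * (T v) i j := by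
      rw [Finset.mul_sum]
      refine Finset.sum_congr rfl fun i _ => ?_
      rw [Finset.mul_sum]
      refine Finset.sum_congr rfl fun j _ => ?_
      ring
    rw [this, hbT v, mul_zero]
  · intro i j hok
    have : (Pᵀ * ((Real.sqrt S)⁻¹ • Ch) * P) i j = (Real.sqrt S)⁻¹ * (Pᵀ * Ch * P) i j := by
      rw [Matrix.mul_smul, Matrix.smul_mul, Matrix.smul_apply, smul_eq_mul]
    rw [this, hbP i j hok, mul_zero]


lemma eig_det {A P : Mat n} {lam : Fin n → ℝ} (h : IsEigDecomp A P lam) (t : ℝ) :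
    (t • (1 : Mat n) - A).det = ∏ i, (t - lam i) := by
  obtain ⟨⟨h1, h2⟩, _, rfl⟩ := h
  have hsm : P * (t • (1 : Mat n)) * Pᵀ = t • (1 : Mat n) := by
    rw [Matrix.mul_smul, Matrix.mul_one, Matrix.smul_mul, h1]
  have key : t • (1 : Mat n) - P * Matrix.diagonal lam * Pᵀ
      = P * (t • (1 : Mat n) - Matrix.diagonal lam) * Pᵀ := by
    rw [Matrix.mul_sub, Matrix.sub_mul, hsm]
  have hdiag : t • (1 : Mat n) - Matrix.diagonal lam
      = Matrix.diagonal (fun i => t - lam i) := by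
    ext i j
    by_cases hij : i = j <;>
      simp [Matrix.sub_apply, Matrix.one_apply, Matrix.diagonal_apply, hij]
  have hdet : P.det * Pᵀ.det = 1 := by rw [← Matrix.det_mul, h1, Matrix.det_one]
  rw [key, Matrix.det_mul, Matrix.det_mul, hdiag, Matrix.det_diagonal]
  linear_combination (∏ i, (t - lam i)) * hdet

lemma lam_unique {A P P' : Mat n} {lam lam' : Fin n → ℝ}
    (h : IsEigDecomp A P lam) (h' : IsEigDecomp A P' lam') : lam = lam' := by
  have hdet : ∀ t : ℝ, ∏ i, (t - lam i) = ∏ i, (t - lam' i) := fun t => by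
    rw [← eig_det h t, ← eig_det h' t]
  have hpoly : (∏ i, (Polynomial.X - Polynomial.C (lam i)) : Polynomial ℝ)
      = ∏ i, (Polynomial.X - Polynomial.C (lam' i)) := by
    refine Polynomial.funext fun t => ?_
    simpa [Polynomial.eval_prod] using hdet t
  have hroots : (Multiset.map lam Finset.univ.val) = Multiset.map lam' Finset.univ.val := by
    have e1 : (∏ i, (Polynomial.X - Polynomial.C (lam i)) : Polynomial ℝ)
        = ((Multiset.map lam Finset.univ.val).map
            (fun a => Polynomial.X - Polynomial.C a)).prod := by
      rw [Finset.prod_eq_multiset_prod, Multiset.map_map]; rfl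
    have e2 : (∏ i, (Polynomial.X - Polynomial.C (lam' i)) : Polynomial ℝ)
        = ((Multiset.map lam' Finset.univ.val).map
            (fun a => Polynomial.X - Polynomial.C a)).prod := by
      rw [Finset.prod_eq_multiset_prod, Multiset.map_map]; rfl
    have := congrArg Polynomial.roots (e1 ▸ e2 ▸ hpoly)
    rwa [Polynomial.roots_multiset_prod_X_sub_C, Polynomial.roots_multiset_prod_X_sub_C] at this
  rw [Fin.univ_val_map, Fin.univ_val_map, Multiset.coe_eq_coe] at hroots
  have hs : List.Pairwise (fun a b : ℝ => b ≤ a) (List.ofFn lam) :=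
    List.pairwise_ofFn.mpr fun i j hij => h.2.1 hij.le
  have hs' : List.Pairwise (fun a b : ℝ => b ≤ a) (List.ofFn lam') :=
    List.pairwise_ofFn.mpr fun i j hij => h'.2.1 hij.le
  haveI : IsAntisymm ℝ (fun a b => b ≤ a) := ⟨fun a b hab hba => le_antisymm hba hab⟩
  exact List.ofFn_injective (List.Perm.eq_of_pairwise (fun a b _ _ hab hba => le_antisymm hba hab) hs hs' hroots)


lemma neg_iff {q : ℕ} (lam : Fin n → ℝ) (hA : Antitone lam)
    (hq : {i : Fin n | lam i < 0}.ncard = q) :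
    ∀ i : Fin n, lam i < 0 ↔ n - q ≤ (i : ℕ) := by
  classical
  set s : Finset (Fin n) := Finset.univ.filter (fun i => lam i < 0) with hs
  have hcard : s.card = q := by
    rw [← hq]
    have : {i : Fin n | lam i < 0} = ↑s := by
      ext i; simp [hs]
    rw [this, Set.ncard_coe_finset]
  intro i
  constructor
  · intro hi
    have hsub : Finset.Ici i ⊆ s := by
      intro j hj
      simp only [Finset.mem_Ici] at hj
      simp only [hs, Finset.mem_filter, Finset.mem_univ, true_and]
      exact lt_of_le_of_lt (hA hj) hi
    have := Finset.card_le_card hsub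
    rw [Fin.card_Ici, hcard] at this
    have := i.isLt
    omega
  · intro hi
    by_contra hneg
    push_neg at hneg
    have hsub : s ⊆ Finset.Ioi i := by
      intro j hj
      simp only [hs, Finset.mem_filter, Finset.mem_univ, true_and] at hj
      simp only [Finset.mem_Ioi]
      by_contra hji
      push_neg at hji
      exact absurd (lt_of_le_of_lt (hA hji) hj) (not_lt.mpr hneg)
    have := Finset.card_le_card hsub
    rw [Fin.card_Ioi, hcard] at this
    have := i.isLt
    omega

lemma continuous_entry (i j : Fin n) : Continuous fun A : Mat n => A i j :=
  LinearMap.continuous_of_finiteDimensional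
    ({ toFun := fun A : Mat n => A i j
       map_add' := fun _ _ => rfl
       map_smul' := fun _ _ => rfl } : Mat n →ₗ[ℝ] ℝ)

lemma PPt_entry (P : Mat n) (i j : Fin n) : (P * Pᵀ) i j = ∑ a, P i a * P j a := by
  simp [Matrix.mul_apply]

lemma PtP_entry (P : Mat n) (i j : Fin n) : (Pᵀ * P) i j = ∑ a, P a i * P a j := by
  simp [Matrix.mul_apply]

lemma PDPt_entry (P : Mat n) (lam : Fin n → ℝ) (i j : Fin n) :
    (P * Matrix.diagonal lam * Pᵀ) i j = ∑ b, P i b * lam b * P j b := by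
  simp [Matrix.mul_apply, Matrix.diagonal_apply, mul_ite, mul_zero, ite_mul, zero_mul,
    Finset.sum_ite_eq, Finset.sum_mul]

lemma PtCP_entry (P C : Mat n) (i j : Fin n) :
    (Pᵀ * C * P) i j = ∑ b, ∑ a, P a i * C a b * P b j := by
  simp [Matrix.mul_apply, Finset.sum_mul]

lemma ortho_entry_abs_le_one {P : Mat n} (h : Pᵀ * P = 1) (a i : Fin n) : |P a i| ≤ 1 := by
  have h1 : ∑ b, P b i * P b i = 1 := by
    have h2 := congrFun (congrFun h i) i
    rw [PtP_entry] at h2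
    rw [h2, Matrix.one_apply_eq]
  have h2 : P a i * P a i ≤ 1 := by
    rw [← h1]
    exact Finset.single_le_sum (f := fun b => P b i * P b i)
      (fun b _ => mul_self_nonneg _) (Finset.mem_univ a)
  nlinarith [abs_nonneg (P a i), sq_abs (P a i)]

lemma diag_abs_bound {A P : Mat n} {lam : Fin n → ℝ} (h : IsEigDecomp A P lam) (i : Fin n) :
    |lam i| ≤ ∑ a, ∑ b, |A a b| := by
  obtain ⟨⟨h1, h2⟩, _, hAeq⟩ := h
  have hP : ∀ a b, |P a b| ≤ 1 := fun a b => ortho_entry_abs_le_one h2 a b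
  have hD : Matrix.diagonal lam = Pᵀ * A * P := by
    rw [hAeq]
    have : Pᵀ * (P * Matrix.diagonal lam * Pᵀ) * P
        = (Pᵀ * P) * Matrix.diagonal lam * (Pᵀ * P) := by
      simp only [Matrix.mul_assoc]
    rw [this, h2, Matrix.one_mul, Matrix.mul_one]
  have hli : lam i = ∑ b, ∑ a, P a i * A a b * P b i := by
    have h3 := congrFun (congrFun hD i) i
    rw [Matrix.diagonal_apply_eq, PtCP_entry] at h3
    exact h3
  rw [hli]
  calc |∑ b, ∑ a, P a i * A a b * P b i| ≤ ∑ b, ∑ a, |P a i * A a b * P b i| := by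
        refine (Finset.abs_sum_le_sum_abs _ _).trans ?_
        exact Finset.sum_le_sum fun b _ => Finset.abs_sum_le_sum_abs _ _
    _ ≤ ∑ b, ∑ a, |A a b| := by
        refine Finset.sum_le_sum fun b _ => Finset.sum_le_sum fun a _ => ?_
        rw [abs_mul, abs_mul]
        calc |P a i| * |A a b| * |P b i| ≤ |A a b| * |P b i| :=
              mul_le_mul_of_nonneg_right
                (mul_le_of_le_one_left (abs_nonneg _) (hP a i)) (abs_nonneg _)
          _ ≤ |A a b| := mul_le_of_le_one_right (abs_nonneg _) (hP b i)
    _ = ∑ a, ∑ b, |A a b| := Finset.sum_comm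

lemma entry_abs_le_one_of_sum_sq {C : Mat n} (h : (∑ i, ∑ j, C i j ^ 2) = 1) (i j : Fin n) :
    |C i j| ≤ 1 := by
  have h1 : C i j ^ 2 ≤ 1 := by
    rw [← h]
    calc C i j ^ 2 ≤ ∑ b, C i b ^ 2 :=
          Finset.single_le_sum (f := fun b => C i b ^ 2) (fun b _ => sq_nonneg _)
            (Finset.mem_univ j)
      _ ≤ ∑ a, ∑ b, C a b ^ 2 :=
          Finset.single_le_sum (f := fun a => ∑ b, C a b ^ 2)
            (fun a _ => Finset.sum_nonneg fun b _ => sq_nonneg _) (Finset.mem_univ i)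
  nlinarith [abs_nonneg (C i j), sq_abs (C i j)]

lemma fderiv_isSymm {g : Em m → Mat n} (hg : ContDiff ℝ 2 g) (hgs : ∀ x, (g x).IsSymm)
    (x v : Em m) : (fderiv ℝ g x v).IsSymm := by
  set τ : Mat n →L[ℝ] Mat n := LinearMap.toContinuousLinearMap
    ({ toFun := fun A : Mat n => Aᵀ
       map_add' := fun A B => Matrix.transpose_add A B
       map_smul' := fun c A => Matrix.transpose_smul c A } : Mat n →ₗ[ℝ] Mat n) with hτ
  have hdiff : DifferentiableAt ℝ g x := (hg.differentiable (by norm_num)).differentiableAt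
  have hτap : ∀ A : Mat n, τ A = Aᵀ := fun A => rfl
  have hcomp : fderiv ℝ (τ ∘ g) x = τ.comp (fderiv ℝ g x) := by
    have := fderiv_comp x τ.differentiableAt hdiff; exact this.trans (congrArg (fun L => L.comp (fderiv ℝ g x)) (τ.fderiv : fderiv ℝ τ (g x) = τ))
  have hgg : τ ∘ g = g := funext fun y => by rw [Function.comp_apply, hτap]; exact hgs y
  rw [hgg] at hcomp
  have h2 := congrArg (fun (L : Em m →L[ℝ] Mat n) => L v) hcomp
  simp only [ContinuousLinearMap.comp_apply] at h2
  rw [hτap] at h2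
  exact h2.symm

end WSRCQAux
end

open WSRCQAux Filter Topology

/-- Openness of the W-SRCQ along points with the same negative inertia
index: if the W-SRCQ holds at `z̄` and `q` is the negative inertia index of `G(z̄)`, then it
holds at all nearby `z ∈ ℝᵐ × Sⁿ` whose `G(z)` has negative inertia index `q`. -/
theorem WSRCQ_open_fixed_negative_inertia {m n q : ℕ}
    (g : Em m → Mat n)
    (hg : ContDiff ℝ 2 g) (hgs : ∀ x, (g x).IsSymm)
    (zbar : Em m × Mat n) (hsym : zbar.2.IsSymm)
    (hq : negInertiaIs (Gmap g zbar) q)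
    (hW : WSRCQ g zbar) :
    ∃ U : Set (Em m × Mat n), IsOpen U ∧ zbar ∈ U ∧
      ∀ z ∈ U, z.2.IsSymm → negInertiaIs (Gmap g z) q → WSRCQ g z := by
  classical
  by_contra hcon
  push_neg at hcon
  have hseq : ∀ k : ℕ, ∃ z', z' ∈ Metric.ball zbar (1/((k:ℝ)+1)) ∧ z'.2.IsSymm ∧
      negInertiaIs (Gmap g z') q ∧ ¬WSRCQ g z' := by
    intro k
    obtain ⟨z', hz1, hz2, hz3, hz4⟩ := hcon (Metric.ball zbar (1/((k:ℝ)+1)))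
      Metric.isOpen_ball (Metric.mem_ball_self (by positivity))
    exact ⟨z', hz1, hz2, hz3, hz4⟩
  choose z hzball hzsym hzin hznot using hseq
  have hzlim : Tendsto z atTop (𝓝 zbar) := by
    apply tendsto_iff_dist_tendsto_zero.mpr
    refine squeeze_zero (fun k => dist_nonneg)
      (fun k => (Metric.mem_ball.mp (hzball k)).le) ?_
    exact tendsto_one_div_add_atTop_nhds_zero_nat
  have hfail : ∀ k, ∃ P lam, IsEigDecomp (Gmap g (z k)) P lam ∧
      ¬ ∀ C : Mat n, C.IsSymm → ∃ (v : Em m) (B : Mat n), B.IsSymm ∧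
        (∀ i j, lam i = 0 → lam j < 0 → B i j = 0) ∧
        (∀ i j, lam i < 0 → lam j < 0 → B i j = 0) ∧
        C = fderiv ℝ g (z k).1 v + P * B * Pᵀ := by
    intro k
    by_contra hcc
    push_neg at hcc
    exact hznot k fun P lam hdec C hC => hcc P lam hdec C hC
  choose Pk lamk hdec hfail2 using hfail
  have hwit : ∀ k, ∃ C : Mat n, C.IsSymm ∧ (∑ i, ∑ j, C i j ^ 2) = 1 ∧
      (∀ v, ∑ i, ∑ j, C i j * (fderiv ℝ g (z k).1 v) i j = 0) ∧
      (∀ i j, okp (lamk k) i j → ((Pk k)ᵀ * C * Pk k) i j = 0) := fun k =>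
    exists_witness (fderiv ℝ g (z k).1) (fun v => fderiv_isSymm hg hgs _ v)
      (Pk k) (lamk k) (hfail2 k)
  choose Ck hCksym hCknorm hCkoT hCkoP using hwit
  have hklam : ∀ k, ∀ i : Fin n, lamk k i < 0 ↔ n - q ≤ (i:ℕ) := by
    intro k
    obtain ⟨P0, lam0, hdec0, hq0⟩ := hzin k
    have hlu : lamk k = lam0 := lam_unique (hdec k) hdec0
    exact neg_iff (lamk k) (hdec k).2.1 (by rw [hlu]; exact hq0)
  -- boundedness of the eigenvalues
  have hGlim : ∀ a b : Fin n, Tendsto (fun k => Gmap g (z k) a b) atTop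
      (𝓝 (Gmap g zbar a b)) := by
    intro a b
    have hcont : Continuous fun w : Em m × Mat n => Gmap g w a b := by
      have hrw : (fun w : Em m × Mat n => Gmap g w a b)
          = fun w => g w.1 a b + w.2 a b := rfl
      rw [hrw]
      exact ((continuous_entry a b).comp (hg.continuous.comp continuous_fst)).add
        ((continuous_entry a b).comp continuous_snd)
    exact (hcont.tendsto zbar).comp hzlim
  have hsum_lim : Tendsto (fun k => ∑ a, ∑ b, |Gmap g (z k) a b|) atTop
      (𝓝 (∑ a, ∑ b, |Gmap g zbar a b|)) :=
    tendsto_finset_sum _ fun a _ => tendsto_finset_sum _ fun b _ => (hGlim a b).abs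
  obtain ⟨M, hM⟩ := hsum_lim.bddAbove_range
  have hlam_bound : ∀ k i, |lamk k i| ≤ M := fun k i =>
    le_trans (diag_abs_bound (hdec k) i) (hM (Set.mem_range_self k))
  -- compactness
  set Y := ((Fin n × Fin n) → ℝ) × (Fin n → ℝ) × ((Fin n × Fin n) → ℝ) with hY
  set y : ℕ → Y := fun k => (fun p => Pk k p.1 p.2, lamk k, fun p => Ck k p.1 p.2) with hy
  set R : ℝ := max 1 M with hR
  have hyball : ∀ k, y k ∈ Metric.closedBall (0 : Y) R := by
    intro k
    rw [Metric.mem_closedBall, dist_zero_right]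
    rw [Prod.norm_def, Prod.norm_def]
    have hR1 : (1:ℝ) ≤ R := le_max_left _ _
    have hRM : M ≤ R := le_max_right _ _
    have hR0 : (0:ℝ) ≤ R := le_trans zero_le_one hR1
    refine max_le ?_ (max_le ?_ ?_)
    · rw [pi_norm_le_iff_of_nonneg hR0]
      intro p
      rw [Real.norm_eq_abs]
      exact le_trans (ortho_entry_abs_le_one ((hdec k).1.2) p.1 p.2) hR1
    · rw [pi_norm_le_iff_of_nonneg hR0]
      intro i
      rw [Real.norm_eq_abs]
      exact le_trans (hlam_bound k i) hRM
    · rw [pi_norm_le_iff_of_nonneg hR0]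
      intro p
      rw [Real.norm_eq_abs]
      exact le_trans (entry_abs_le_one_of_sum_sq (hCknorm k) p.1 p.2) hR1
  obtain ⟨a, -, φ, hφmono, hφlim⟩ := (isCompact_closedBall (0:Y) R).tendsto_subseq hyball
  obtain ⟨u, l, c⟩ := a
  set Pl : Mat n := Matrix.of fun i j => u (i, j) with hPldef
  set Cl : Mat n := Matrix.of fun i j => c (i, j) with hCldef
  have hPl : ∀ i j, Tendsto (fun k => Pk (φ k) i j) atTop (𝓝 (Pl i j)) := by
    intro i j
    have h1 : Tendsto (fun k => (y (φ k)).1) atTop (𝓝 u) :=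
      (continuous_fst.tendsto _).comp hφlim
    exact tendsto_pi_nhds.mp h1 (i, j)
  have hll : ∀ i, Tendsto (fun k => lamk (φ k) i) atTop (𝓝 (l i)) := by
    intro i
    have h1 : Tendsto (fun k => (y (φ k)).2.1) atTop (𝓝 l) :=
      ((continuous_fst.comp continuous_snd).tendsto _).comp hφlim
    exact tendsto_pi_nhds.mp h1 i
  have hCl : ∀ i j, Tendsto (fun k => Ck (φ k) i j) atTop (𝓝 (Cl i j)) := by
    intro i j
    have h1 : Tendsto (fun k => (y (φ k)).2.2) atTop (𝓝 c) :=
      ((continuous_snd.comp continuous_snd).tendsto _).comp hφlim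
    exact tendsto_pi_nhds.mp h1 (i, j)
  have hzφ : Tendsto (fun k => z (φ k)) atTop (𝓝 zbar) :=
    hzlim.comp hφmono.tendsto_atTop
  -- limit eigendecomposition
  have hPo1 : Pl * Plᵀ = 1 := by
    ext i j
    have ht : Tendsto (fun k => (Pk (φ k) * (Pk (φ k))ᵀ) i j) atTop
        (𝓝 ((Pl * Plᵀ) i j)) := by
      simp only [PPt_entry]
      exact tendsto_finset_sum _ fun a _ => (hPl i a).mul (hPl j a)
    have hconst : (fun k => (Pk (φ k) * (Pk (φ k))ᵀ) i j) = fun _ => (1 : Mat n) i j := by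
      funext k; rw [(hdec (φ k)).1.1]
    rw [hconst] at ht
    exact tendsto_nhds_unique ht tendsto_const_nhds
  have hPo2 : Plᵀ * Pl = 1 := by
    ext i j
    have ht : Tendsto (fun k => ((Pk (φ k))ᵀ * Pk (φ k)) i j) atTop
        (𝓝 ((Plᵀ * Pl) i j)) := by
      simp only [PtP_entry]
      exact tendsto_finset_sum _ fun a _ => (hPl a i).mul (hPl a j)
    have hconst : (fun k => ((Pk (φ k))ᵀ * Pk (φ k)) i j) = fun _ => (1 : Mat n) i j := by
      funext k; rw [(hdec (φ k)).1.2]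
    rw [hconst] at ht
    exact tendsto_nhds_unique ht tendsto_const_nhds
  have hlant : Antitone l := fun i j hij =>
    le_of_tendsto_of_tendsto' (hll j) (hll i) fun k => (hdec (φ k)).2.1 hij
  have hGdecomp : Gmap g zbar = Pl * Matrix.diagonal l * Plᵀ := by
    ext i j
    have ht1 : Tendsto (fun k => Gmap g (z (φ k)) i j) atTop (𝓝 (Gmap g zbar i j)) :=
      (hGlim i j).comp hφmono.tendsto_atTop
    have ht2 : Tendsto (fun k => (Pk (φ k) * Matrix.diagonal (lamk (φ k)) * (Pk (φ k))ᵀ) i j)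
        atTop (𝓝 ((Pl * Matrix.diagonal l * Plᵀ) i j)) := by
      simp only [PDPt_entry]
      exact tendsto_finset_sum _ fun b _ => ((hPl i b).mul (hll b)).mul (hPl j b)
    have heqk : (fun k => Gmap g (z (φ k)) i j)
        = fun k => (Pk (φ k) * Matrix.diagonal (lamk (φ k)) * (Pk (φ k))ᵀ) i j := by
      funext k; rw [← (hdec (φ k)).2.2]
    rw [heqk] at ht1
    exact tendsto_nhds_unique ht1 ht2
  have hdecL : IsEigDecomp (Gmap g zbar) Pl l := ⟨⟨hPo1, hPo2⟩, hlant, hGdecomp⟩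
  have hlneg : ∀ i : Fin n, l i < 0 ↔ n - q ≤ (i:ℕ) := by
    obtain ⟨P0, lam0, hdec0, hq0⟩ := hq
    have hlu : l = lam0 := lam_unique hdecL hdec0
    exact neg_iff l hlant (by rw [hlu]; exact hq0)
  -- limit witness properties
  have hClsym : Cl.IsSymm := by
    ext i j
    rw [Matrix.transpose_apply]
    have h1 : Tendsto (fun k => Ck (φ k) j i) atTop (𝓝 (Cl j i)) := hCl j i
    have h2 : Tendsto (fun k => Ck (φ k) j i) atTop (𝓝 (Cl i j)) := by
      have hrw : (fun k => Ck (φ k) j i) = fun k => Ck (φ k) i j :=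
        funext fun k => (hCksym (φ k)).apply i j
      rw [hrw]; exact hCl i j
    exact tendsto_nhds_unique h1 h2
  have hClnorm : (∑ i, ∑ j, Cl i j ^ 2) = 1 := by
    have ht : Tendsto (fun k => ∑ i, ∑ j, Ck (φ k) i j ^ 2) atTop
        (𝓝 (∑ i, ∑ j, Cl i j ^ 2)) :=
      tendsto_finset_sum _ fun i _ => tendsto_finset_sum _ fun j _ => (hCl i j).pow 2
    have hconst : (fun k => ∑ i, ∑ j, Ck (φ k) i j ^ 2) = fun _ => (1:ℝ) :=
      funext fun k => hCknorm (φ k)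
    rw [hconst] at ht
    exact tendsto_nhds_unique ht tendsto_const_nhds
  have hCloT : ∀ v, ∑ i, ∑ j, Cl i j * (fderiv ℝ g zbar.1 v) i j = 0 := by
    intro v
    have hfd : ∀ i j : Fin n, Tendsto (fun k => (fderiv ℝ g (z (φ k)).1 v) i j) atTop
        (𝓝 ((fderiv ℝ g zbar.1 v) i j)) := by
      intro i j
      have hcont : Continuous fun x : Em m => (fderiv ℝ g x v) i j :=
        (continuous_entry i j).comp
          ((ContinuousLinearMap.apply ℝ (Mat n) v).continuous.comp
            (hg.continuous_fderiv (by norm_num)))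
      exact (hcont.tendsto zbar.1).comp ((continuous_fst.tendsto zbar).comp hzφ)
    have ht : Tendsto (fun k => ∑ i, ∑ j, Ck (φ k) i j * (fderiv ℝ g (z (φ k)).1 v) i j)
        atTop (𝓝 (∑ i, ∑ j, Cl i j * (fderiv ℝ g zbar.1 v) i j)) :=
      tendsto_finset_sum _ fun i _ => tendsto_finset_sum _ fun j _ =>
        (hCl i j).mul (hfd i j)
    have hconst : (fun k => ∑ i, ∑ j, Ck (φ k) i j * (fderiv ℝ g (z (φ k)).1 v) i j)
        = fun _ => (0:ℝ) := funext fun k => hCkoT (φ k) v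
    rw [hconst] at ht
    exact tendsto_nhds_unique ht tendsto_const_nhds
  have hCloP : ∀ i j, okp l i j → (Plᵀ * Cl * Pl) i j = 0 := by
    intro i j hok
    have hev1 : ∀ᶠ k in atTop, (0 < l i → 0 < lamk (φ k) i) := by
      by_cases hpos : 0 < l i
      · exact ((hll i).eventually (eventually_gt_nhds hpos)).mono fun k hk _ => hk
      · exact Filter.Eventually.of_forall fun k h => absurd h hpos
    have hev2 : ∀ᶠ k in atTop, (0 < l j → 0 < lamk (φ k) j) := by
      by_cases hpos : 0 < l j
      · exact ((hll j).eventually (eventually_gt_nhds hpos)).mono fun k hk _ => hk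
      · exact Filter.Eventually.of_forall fun k h => absurd h hpos
    have hev : ∀ᶠ k in atTop, ((Pk (φ k))ᵀ * Ck (φ k) * Pk (φ k)) i j = 0 := by
      filter_upwards [hev1, hev2] with k h1 h2
      refine hCkoP (φ k) i j ?_
      intro hbad
      apply hok
      rcases hbad with ⟨hi, hj⟩ | ⟨hj, hi⟩
      · left
        have hlj : l j < 0 := (hlneg j).mpr ((hklam (φ k) j).mp hj)
        refine ⟨?_, hlj⟩
        by_contra hli
        push_neg at hli
        exact absurd (h1 hli) (not_lt.mpr hi)
      · right
        have hli : l i < 0 := (hlneg i).mpr ((hklam (φ k) i).mp hi)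
        refine ⟨?_, hli⟩
        by_contra hlj
        push_neg at hlj
        exact absurd (h2 hlj) (not_lt.mpr hj)
    have ht : Tendsto (fun k => ((Pk (φ k))ᵀ * Ck (φ k) * Pk (φ k)) i j) atTop
        (𝓝 ((Plᵀ * Cl * Pl) i j)) := by
      simp only [PtCP_entry]
      exact tendsto_finset_sum _ fun b _ => tendsto_finset_sum _ fun a _ =>
        ((hPl a i).mul (hCl a b)).mul (hPl b j)
    have ht0 : Tendsto (fun k => ((Pk (φ k))ᵀ * Ck (φ k) * Pk (φ k)) i j) atTop (𝓝 0) :=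
      Tendsto.congr' (hev.mono fun k hk => hk.symm) tendsto_const_nhds
    exact tendsto_nhds_unique ht ht0
  -- final contradiction with the W-SRCQ at zbar
  obtain ⟨v, B, hBsym, hB1, hB2, heqrep⟩ := hW Pl l hdecL Cl hClsym
  have hBzero : ∀ i j, ¬ okp l i j → B i j = 0 := by
    intro i j hok
    rcases not_not.mp hok with ⟨hi, hj⟩ | ⟨hj, hi⟩
    · rcases lt_or_eq_of_le hi with h | h
      · exact hB2 i j h hj
      · exact hB1 i j h hj
    · have hsw : B i j = B j i := hBsym.apply j i
      rw [hsw]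
      rcases lt_or_eq_of_le hj with h | h
      · exact hB2 j i h hi
      · exact hB1 j i h hi
  have hfinal : (1:ℝ) = 0 := by
    calc (1:ℝ) = ∑ i, ∑ j, Cl i j ^ 2 := hClnorm.symm
      _ = ∑ i, ∑ j, Cl i j * Cl i j := by
          refine Finset.sum_congr rfl fun i _ => Finset.sum_congr rfl fun j _ => ?_
          ring
      _ = ∑ i, ∑ j, Cl i j * ((fderiv ℝ g zbar.1 v + Pl * B * Plᵀ) i j) := by
          rw [← heqrep]
      _ = (∑ i, ∑ j, Cl i j * (fderiv ℝ g zbar.1 v) i j)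
          + ∑ i, ∑ j, Cl i j * (Pl * B * Plᵀ) i j := by
          simp only [Matrix.add_apply, mul_add, Finset.sum_add_distrib]
      _ = ∑ i, ∑ j, Cl i j * (Pl * B * Plᵀ) i j := by rw [hCloT v, zero_add]
      _ = ∑ i, ∑ j, (Pl * B * Plᵀ) i j * Cl i j := by
          refine Finset.sum_congr rfl fun i _ => Finset.sum_congr rfl fun j _ => ?_
          ring
      _ = ∑ i, ∑ j, B i j * (Plᵀ * Cl * Pl) i j := exchange Pl B Cl
      _ = 0 := Finset.sum_eq_zero fun i _ => Finset.sum_eq_zero fun j _ => by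
          by_cases hok : okp l i j
          · rw [hCloP i j hok, mul_zero]
          · rw [hBzero i j hok, zero_mul]
  exact one_ne_zero hfinal
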